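/- Let 𝒜 be a unital C*-algebra, e a projection in 𝒜, and q a self-adjoint element with ‖e − q‖ < 1/8. Then σ(q) ⊆ (−1/8, 1/8) ∪ (7/8, 9/8), and if φ: ℝ → ℝ is a continuous function with φ = 0 on (−1/4, 1/4) and φ = 1 on (3/4, 5/4) and 0 ≤ φ ≤ 1, then φ(q) is a projection satisfying ‖φ(q) − e‖ < 1/4. -/

import Mathlib

/-- If `e` is a projection and `q` self-adjoint with `‖e - q‖ < 1/8` in a
unital C*-algebra, then `σ(q) ⊆ (-1/8,1/8) ∪ (7/8,9/8)`, and for any continuous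
`φ : ℝ → ℝ` vanishing on `(-1/4,1/4)`, equal to `1` on `(3/4,5/4)` and with values in `[0,1]`,
the element `φ(q)` is a projection with `‖φ(q) - e‖ < 1/4`. -/
theorem projection_from_functional_calculus {A : Type*} [CStarAlgebra A]
    (e q : A) (he : IsSelfAdjoint e) (he2 : e * e = e) (hq : IsSelfAdjoint q)
    (hd : ‖e - q‖ < 1 / 8) :
    spectrum ℝ q ⊆ Set.Ioo (-(1 / 8) : ℝ) (1 / 8) ∪ Set.Ioo (7 / 8 : ℝ) (9 / 8) ∧
    ∀ φ : ℝ → ℝ, Continuous φ →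
      (∀ x ∈ Set.Ioo (-(1 / 4) : ℝ) (1 / 4), φ x = 0) →
      (∀ x ∈ Set.Ioo (3 / 4 : ℝ) (5 / 4), φ x = 1) →
      (∀ x : ℝ, φ x ∈ Set.Icc (0 : ℝ) 1) →
      IsSelfAdjoint (cfc φ q) ∧ cfc φ q * cfc φ q = cfc φ q ∧ ‖cfc φ q - e‖ < 1 / 4 := by
  -- spectrum of e is contained in {0, 1}
  have hspec_e : ∀ t ∈ spectrum ℝ e, t = 0 ∨ t = 1 := by
    intro t ht
    have hnt : Nontrivial A := by
      rcases subsingleton_or_nontrivial A with h | h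
      · exact absurd (isUnit_of_subsingleton _) ht
      · exact h
    have h0 : cfc (fun t : ℝ => t * t - t) e = 0 := by
      rw [cfc_sub _ _, cfc_mul _ _, cfc_id' ℝ e, he2, sub_self]
    have := cfc_map_spectrum (R := ℝ) (fun t : ℝ => t * t - t) e
    rw [h0, spectrum.zero_eq] at this
    have : t * t - t ∈ ({0} : Set ℝ) := this ▸ Set.mem_image_of_mem _ ht
    have h : t * (t - 1) = 0 := by
      simp only [Set.mem_singleton_iff] at this; ring_nf; linarith [this]
    rcases mul_eq_zero.mp h with h | h
    · exact Or.inl h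
    · exact Or.inr (by linarith)
  -- the spectral inclusion
  have hmain : spectrum ℝ q ⊆ Set.Ioo (-(1 / 8) : ℝ) (1 / 8) ∪ Set.Ioo (7 / 8 : ℝ) (9 / 8) := by
    intro x hx
    by_contra hxc
    simp only [Set.mem_union, Set.mem_Ioo, not_or, not_and_or, not_lt] at hxc
    have hx0 : (1 : ℝ) / 8 ≤ |x| := by
      rcases hxc.1 with h | h
      · rw [abs_of_nonpos (by linarith)]; linarith
      · rw [abs_of_nonneg (by linarith)]; linarith
    have hx1 : (1 : ℝ) / 8 ≤ |x - 1| := by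
      rcases hxc.2 with h | h
      · rw [abs_of_nonpos (by linarith)]; linarith
      · rw [abs_of_nonneg (by linarith)]; linarith
    have hnt : Nontrivial A := by
      rcases subsingleton_or_nontrivial A with h | h
      · exact absurd (isUnit_of_subsingleton _) hx
      · exact h
    -- the resolvent of e at x
    set b : A := cfc (fun t : ℝ => (x - t)⁻¹) e with hb
    have hcont : ContinuousOn (fun t : ℝ => (x - t)⁻¹) (spectrum ℝ e) := by
      apply ContinuousOn.inv₀ (by fun_prop)
      intro t ht
      rcases hspec_e t ht with rfl | rfl
      · intro h; rw [sub_zero] at h; rw [h] at hx0; norm_num at hx0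
      · intro h; have : x - 1 = 0 := h; rw [this] at hx1; norm_num at hx1
    have hue : algebraMap ℝ A x - e = cfc (fun t : ℝ => x - t) e := by
      rw [cfc_sub _ _, cfc_const x e, cfc_id' ℝ e]
    have hub : (algebraMap ℝ A x - e) * b = 1 := by
      rw [hue, hb, ← cfc_mul _ _ e (by fun_prop) hcont]
      rw [show (1 : A) = cfc (fun _ : ℝ => (1 : ℝ)) e from (cfc_const_one ℝ e).symm]
      apply cfc_congr
      intro t ht
      have : x - t ≠ 0 := by
        rcases hspec_e t ht with rfl | rfl
        · intro h; rw [sub_zero] at h; rw [h] at hx0; norm_num at hx0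
        · intro h; have : x - 1 = 0 := h; rw [this] at hx1; norm_num at hx1
      exact mul_inv_cancel₀ this
    have hbu : b * (algebraMap ℝ A x - e) = 1 := by
      rw [hue, hb, ← cfc_mul _ _ e hcont (by fun_prop)]
      rw [show (1 : A) = cfc (fun _ : ℝ => (1 : ℝ)) e from (cfc_const_one ℝ e).symm]
      apply cfc_congr
      intro t ht
      have : x - t ≠ 0 := by
        rcases hspec_e t ht with rfl | rfl
        · intro h; rw [sub_zero] at h; rw [h] at hx0; norm_num at hx0
        · intro h; have : x - 1 = 0 := h; rw [this] at hx1; norm_num at hx1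
      exact inv_mul_cancel₀ this
    set u : Aˣ := ⟨algebraMap ℝ A x - e, b, hub, hbu⟩ with hu
    -- norm bound on the resolvent
    have hbnorm : ‖b‖ ≤ 8 := by
      apply norm_cfc_le (by norm_num)
      intro t ht
      rcases hspec_e t ht with rfl | rfl
      · rw [sub_zero, Real.norm_eq_abs, abs_inv]
        rw [show (8 : ℝ) = (1/8)⁻¹ by norm_num]
        exact inv_anti₀ (by norm_num) hx0
      · rw [Real.norm_eq_abs, abs_inv]
        rw [show (8 : ℝ) = (1/8)⁻¹ by norm_num]
        exact inv_anti₀ (by norm_num) hx1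
    have hbpos : 0 < ‖b‖ := by
      rcases eq_or_lt_of_le (norm_nonneg b) with h | h
      · exfalso
        have : b = 0 := by rwa [eq_comm, norm_eq_zero] at h
        rw [this, mul_zero] at hub
        exact one_ne_zero hub.symm
      · exact h
    -- perturbation: x - q is a unit
    have hinv : ‖(↑u⁻¹ : A)‖⁻¹ ≥ 1/8 := by
      have : (↑u⁻¹ : A) = b := rfl
      rw [this, ge_iff_le, le_inv_comm₀ (by norm_num) hbpos]
      linarith
    have hnear : ‖(algebraMap ℝ A x - q) - ↑u‖ < ‖(↑u⁻¹ : A)‖⁻¹ := by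
      have : (algebraMap ℝ A x - q) - ↑u = e - q := by
        simp only [hu, Units.val_mk]; abel
      rw [this]
      linarith
    exact hx (Units.ofNearby u _ hnear).isUnit
  refine ⟨hmain, fun φ hφc hφ0 hφ1 hφb => ?_⟩
  have hsa : IsSelfAdjoint (cfc φ q) := cfc_predicate φ q
  have heq : ∀ x ∈ spectrum ℝ q, φ x * φ x = φ x := by
    intro x hx
    rcases hmain hx with h | h
    · obtain ⟨h1, h2⟩ := h
      rw [hφ0 x ⟨by linarith, by linarith⟩, mul_zero]
    · obtain ⟨h1, h2⟩ := h
      rw [hφ1 x ⟨by linarith, by linarith⟩, mul_one]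
  have hproj : cfc φ q * cfc φ q = cfc φ q := by
    rw [← cfc_mul _ _ q]
    exact cfc_congr heq
  refine ⟨hsa, hproj, ?_⟩
  have hclose : ‖cfc φ q - q‖ ≤ 1/8 := by
    have : cfc φ q - q = cfc (fun x : ℝ => φ x - x) q := by
      rw [cfc_sub _ _, cfc_id' ℝ q]
    rw [this]
    apply norm_cfc_le (by norm_num)
    intro x hx
    rcases hmain hx with h | h
    · obtain ⟨h1, h2⟩ := h
      rw [hφ0 x ⟨by linarith, by linarith⟩, zero_sub, norm_neg, Real.norm_eq_abs]
      rw [abs_le]; constructor <;> linarith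
    · obtain ⟨h1, h2⟩ := h
      rw [hφ1 x ⟨by linarith, by linarith⟩, Real.norm_eq_abs]
      rw [abs_le]; constructor <;> linarith
  calc ‖cfc φ q - e‖ ≤ ‖cfc φ q - q‖ + ‖q - e‖ := by
        have : cfc φ q - e = (cfc φ q - q) + (q - e) := by abel
        rw [this]; exact norm_add_le _ _
    _ < 1/4 := by rw [norm_sub_rev q e]; linarith
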